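/- Let $G$ be a compact Lie group and $p: E \to B$ a $G$-fibration over a paracompact base $B$. Then the equivariant sectional category satisfies $\mathsf{secat}_G(p) \le k$ if and only if the $(k+1)$-fold fibred join $p_k: J^k_B(E) \to B$ admits a global $G$-equivariant section. -/

import Mathlib

open unitInterval Set

noncomputable section

/-- The space of paths in `X`: continuous maps from the unit interval. -/
abbrev PathSp (X : Type*) [TopologicalSpace X] := C(I, X)

/-- Path reversal, the `ℤ/2`-action on the path space. -/
def pathRev {X : Type*} [TopologicalSpace X] (γ : PathSp X) : PathSp X :=
  γ.comp ⟨unitInterval.symm, unitInterval.continuous_symm⟩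

/-- The evaluation map `π : PX → X × X`, `γ ↦ (γ 0, γ 1)`. -/
def evalMap (X : Type*) [TopologicalSpace X] : PathSp X → X × X :=
  fun γ => (γ 0, γ 1)

/-- `σ` is a local section of the evaluation map on `U ⊆ X × X` which is equivariant
with respect to transposition and path reversal. -/
def IsSymSection {X : Type*} [TopologicalSpace X] (U : Set (X × X))
    (sec : C(U, PathSp X)) : Prop :=
  (∀ u : U, sec u 0 = (u : X × X).1 ∧ sec u 1 = (u : X × X).2) ∧
  (∀ (u : U) (hs : Prod.swap (u : X × X) ∈ U) (t : I),
      sec ⟨Prod.swap (u : X × X), hs⟩ t = sec u (unitInterval.symm t))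

/-- `TCΣ(X) ≤ k` : there is a cover of `X × X` by `k+1` invariant open sets,
each admitting an equivariant local section of the evaluation map. -/
def TCSigma_le (X : Type*) [TopologicalSpace X] (k : ℕ) : Prop :=
  ∃ U : Fin (k + 1) → Set (X × X),
    (∀ i, IsOpen (U i)) ∧
    (∀ i, ∀ p ∈ U i, Prod.swap p ∈ U i) ∧
    (⋃ i, U i) = Set.univ ∧
    (∀ i, ∃ sec : C(U i, PathSp X), IsSymSection (U i) sec)

/-- The symmetrized topological complexity, as an extended natural number. -/
def TCSigma (X : Type*) [TopologicalSpace X] : ℕ∞ :=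
  sInf {n : ℕ∞ | ∃ k : ℕ, n = k ∧ TCSigma_le X k}

/-- `TC^{M,Σ}(X) ≤ k`: as for `TCΣ` but each set of the cover contains the diagonal and the
sections are constant on the diagonal. -/
def TCMSigma_le (X : Type*) [TopologicalSpace X] (k : ℕ) : Prop :=
  ∃ U : Fin (k + 1) → Set (X × X),
    (∀ i, IsOpen (U i)) ∧
    (∀ i, ∀ p ∈ U i, Prod.swap p ∈ U i) ∧
    (∀ i (x : X), (x, x) ∈ U i) ∧
    (⋃ i, U i) = Set.univ ∧
    (∀ i, ∃ sec : C(U i, PathSp X), IsSymSection (U i) sec ∧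
      ∀ (x : X) (h : (x, x) ∈ U i) (t : I), sec ⟨(x, x), h⟩ t = x)

/-- The monoidal symmetrized topological complexity, as an extended natural number. -/
def TCMSigma (X : Type*) [TopologicalSpace X] : ℕ∞ :=
  sInf {n : ℕ∞ | ∃ k : ℕ, n = k ∧ TCMSigma_le X k}
/-! ### Fibred joins -/

/-- Pre-join data: `k+1` points of `E` in a common fibre of `p`, with join coordinates. -/
abbrev JoinPre {E B : Type*} (p : E → B) (k : ℕ) : Type _ :=
  {x : (Fin (k + 1) → E) × (Fin (k + 1) → I) //
    (∀ i j, p (x.1 i) = p (x.1 j)) ∧ (∑ i, ((x.2 i : ℝ))) = 1}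

/-- Tuples are identified if the join coordinates agree and the points agree wherever
the join coordinate is nonzero. -/
def joinRel {E B : Type*} (p : E → B) (k : ℕ) (a b : JoinPre p k) : Prop :=
  a.1.2 = b.1.2 ∧ ∀ i, a.1.2 i ≠ 0 → a.1.1 i = b.1.1 i

/-- The `(k+1)`-fold fibred join `J^k_B(E)` of a map `p : E → B`. -/
def FibredJoin {E B : Type*} [TopologicalSpace E] [TopologicalSpace B]
    (p : E → B) (k : ℕ) : Type _ :=
  Quot (joinRel p k)

instance FibredJoin.instTop {E B : Type*} [TopologicalSpace E] [TopologicalSpace B]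
    (p : E → B) (k : ℕ) : TopologicalSpace (FibredJoin p k) :=
  instTopologicalSpaceQuot

lemma JoinPre.exists_ne_zero {E B : Type*} {p : E → B} {k : ℕ} (a : JoinPre p k) :
    ∃ i, a.1.2 i ≠ 0 := by
  by_contra h
  push_neg at h
  have := a.2.2
  simp only [h] at this
  norm_num at this

/-- The projection `p_k : J^k_B(E) → B`. -/
def joinProj {E B : Type*} [TopologicalSpace E] [TopologicalSpace B]
    (p : E → B) (k : ℕ) : FibredJoin p k → B :=
  Quot.lift (fun a => p (a.1.1 0)) (by
    rintro a b ⟨ht, he⟩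
    obtain ⟨i, hi⟩ := a.exists_ne_zero
    have h1 : p (a.1.1 0) = p (a.1.1 i) := a.2.1 0 i
    have h2 : p (b.1.1 i) = p (b.1.1 0) := b.2.1 i 0
    simp only [h1, he i hi, h2])

/-- The class of a tuple in the fibred join. -/
def joinMk {E B : Type*} [TopologicalSpace E] [TopologicalSpace B]
    (p : E → B) (k : ℕ) (a : JoinPre p k) : FibredJoin p k :=
  Quot.mk _ a
/-! ### Group actions on fibred joins and lifting functions -/

/-- The diagonal `G`-action on the fibred join of an equivariant map `p`. -/
def joinSMul {G E B : Type*} [Group G] [TopologicalSpace E] [TopologicalSpace B]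
    [MulAction G E] [MulAction G B] {p : E → B} (hp : ∀ (g : G) (e : E), p (g • e) = g • p e)
    (k : ℕ) (g : G) : FibredJoin p k → FibredJoin p k :=
  Quot.map
    (fun a => ⟨((fun i => g • a.1.1 i), a.1.2),
      ⟨fun i j => by simp only [hp, a.2.1 i j], a.2.2⟩⟩)
    (by rintro a b ⟨ht, he⟩; exact ⟨ht, fun i hi => by simp only [he i hi]⟩)

/-- A `G`-lifting function for an equivariant map `p : E → B`: a continuous equivariant
choice of path lifts. -/
def IsGLiftingFunction {G E B : Type*} [Group G] [TopologicalSpace G]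
    [TopologicalSpace E] [TopologicalSpace B] [MulAction G E] [MulAction G B]
    [ContinuousSMul G E] [ContinuousSMul G B] (p : E → B)
    (lam : {q : E × C(I, B) // q.2 0 = p q.1} → C(I, E)) : Prop :=
  Continuous lam ∧
  (∀ q, lam q 0 = q.1.1) ∧
  (∀ q t, p (lam q t) = q.1.2 t) ∧
  (∀ (g : G) (q : {q : E × C(I, B) // q.2 0 = p q.1})
      (hg : (g • q.1.2 : C(I, B)) 0 = p (g • q.1.1)),
      lam ⟨(g • q.1.1, g • q.1.2), hg⟩ = g • lam q)
universe u

/-- The equivariant homotopy lifting property of a `G`-map with respect to all `G`-spaces: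
`p` is a `G`-fibration. -/
def IsGFibration (G : Type*) {E B : Type u} [Group G] [TopologicalSpace G]
    [TopologicalSpace E] [TopologicalSpace B] [MulAction G E] [MulAction G B]
    [ContinuousSMul G E] [ContinuousSMul G B] (p : E → B) : Prop :=
  ∀ (Y : Type u) [TopologicalSpace Y] [MulAction G Y] [ContinuousSMul G Y]
    (f : Y → E), Continuous f → (∀ (g : G) (y : Y), f (g • y) = g • f y) →
    ∀ (H : Y × I → B), Continuous H → (∀ (g : G) (y : Y) (t : I), H (g • y, t) = g • H (y, t)) →
    (∀ y, H (y, 0) = p (f y)) →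
    ∃ F : Y × I → E, Continuous F ∧ (∀ y, F (y, 0) = f y) ∧
      (∀ y t, p (F (y, t)) = H (y, t)) ∧
      (∀ (g : G) (y : Y) (t : I), F (g • y, t) = g • F (y, t))

/-- The equivariant sectional category of `p` is at most `k`: `B` is covered by `k+1`
invariant open sets, each admitting a continuous equivariant local section of `p`. -/
def secatG_le (G : Type*) {E B : Type*} [Group G] [TopologicalSpace G]
    [TopologicalSpace E] [TopologicalSpace B] [MulAction G E] [MulAction G B]
    [ContinuousSMul G E] [ContinuousSMul G B] (p : E → B) (k : ℕ) : Prop :=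
  ∃ U : Fin (k + 1) → Set B,
    (∀ i, IsOpen (U i)) ∧
    (∀ i (g : G), ∀ b ∈ U i, g • b ∈ U i) ∧
    (⋃ i, U i) = Set.univ ∧
    (∀ i, ∃ s : (U i) → E, Continuous s ∧ (∀ b : U i, p (s b) = b) ∧
      (∀ (g : G) (b : U i) (hg : g • (b : B) ∈ U i), s ⟨g • (b : B), hg⟩ = g • s b))


section PouAux
open MeasureTheory

lemma exists_invariant_pou (G : Type*) [Group G] [TopologicalSpace G] [IsTopologicalGroup G]
    [CompactSpace G] {B : Type*} [TopologicalSpace B] [MulAction G B] [ContinuousSMul G B]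
    [ParacompactSpace B] [T2Space B] {n : ℕ} (U : Fin (n + 1) → Set B)
    (ho : ∀ i, IsOpen (U i)) (hinv : ∀ i (g : G), ∀ b ∈ U i, g • b ∈ U i)
    (hcov : (⋃ i, U i) = Set.univ) :
    ∃ f : Fin (n + 1) → B → ℝ, (∀ i, Continuous (f i)) ∧ (∀ i b, 0 ≤ f i b) ∧
      (∀ b, ∑ i, f i b = 1) ∧ (∀ i b, f i b ≠ 0 → b ∈ U i) ∧
      (∀ i (g : G) (b : B), f i (g • b) = f i b) := by
  obtain ⟨f0, hf0⟩ := PartitionOfUnity.exists_isSubordinate isClosed_univ U ho (by rw [hcov])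
  letI : MeasurableSpace G := borel G
  haveI : BorelSpace G := ⟨rfl⟩
  set μ : Measure G := Measure.haarMeasure (⊤ : TopologicalSpace.PositiveCompacts G) with hμ
  haveI : IsProbabilityMeasure μ := by
    constructor
    rw [← TopologicalSpace.PositiveCompacts.coe_top (α := G)]
    exact Measure.haarMeasure_self
  have h01 : ∀ i x, f0 i x ≤ 1 := by
    intro i x
    calc f0 i x ≤ ∑ j, f0 j x :=
          Finset.single_le_sum (fun j _ => f0.nonneg j x) (Finset.mem_univ i)
      _ = ∑ᶠ j, f0 j x := (finsum_eq_sum_of_fintype _).symm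
      _ ≤ 1 := f0.sum_le_one x
  have hmeas : ∀ (i) (b : B), AEStronglyMeasurable (fun g : G => f0 i (g⁻¹ • b)) μ := by
    intro i b
    exact ((f0 i).continuous.comp (continuous_inv.smul continuous_const)).aestronglyMeasurable
  have hbd : ∀ (i) (b : B) (g : G), ‖f0 i (g⁻¹ • b)‖ ≤ 1 := by
    intro i b g
    rw [Real.norm_eq_abs, abs_le]
    exact ⟨by linarith [f0.nonneg i (g⁻¹ • b)], h01 _ _⟩
  have hint : ∀ (i) (b : B), Integrable (fun g : G => f0 i (g⁻¹ • b)) μ := by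
    intro i b
    exact (integrable_const (1 : ℝ)).mono' (hmeas i b)
      (Filter.Eventually.of_forall (hbd i b))
  refine ⟨fun i b => ∫ g : G, f0 i (g⁻¹ • b) ∂μ, ?_, ?_, ?_, ?_, ?_⟩
  · intro i
    rw [continuous_iff_continuousAt]
    intro b0
    rw [ContinuousAt, Metric.tendsto_nhds]
    intro eps heps
    have hcont : Continuous fun x : G × B => f0 i (x.1⁻¹ • x.2) :=
      (f0 i).continuous.comp ((continuous_inv.comp continuous_fst).smul continuous_snd)
    have hA : IsOpen {x : G × B | |f0 i (x.1⁻¹ • x.2) - f0 i (x.1⁻¹ • b0)| < eps / 2} := by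
      have : Continuous fun x : G × B => |f0 i (x.1⁻¹ • x.2) - f0 i (x.1⁻¹ • b0)| :=
        (hcont.sub (hcont.comp (continuous_fst.prodMk continuous_const))).abs
      exact isOpen_lt this continuous_const
    have hsub : (univ : Set G) ×ˢ ({b0} : Set B) ⊆
        {x : G × B | |f0 i (x.1⁻¹ • x.2) - f0 i (x.1⁻¹ • b0)| < eps / 2} := by
      rintro ⟨g, b⟩ ⟨-, hb⟩
      rcases hb with rfl
      simp [half_pos heps]
    obtain ⟨V, W, -, hWo, hV, hWb, hVW⟩ :=
      generalized_tube_lemma isCompact_univ isCompact_singleton hA hsub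
    have hWmem : W ∈ nhds b0 := hWo.mem_nhds (hWb rfl)
    filter_upwards [hWmem] with b hb
    have key : ∀ g : G, ‖f0 i (g⁻¹ • b) - f0 i (g⁻¹ • b0)‖ ≤ eps / 2 := by
      intro g
      exact le_of_lt (hVW (Set.mk_mem_prod (hV (mem_univ g)) hb))
    rw [Real.dist_eq, ← integral_sub (hint i b) (hint i b0)]
    calc |∫ g : G, (f0 i (g⁻¹ • b) - f0 i (g⁻¹ • b0)) ∂μ|
        ≤ eps / 2 * (μ univ).toReal :=
          norm_integral_le_of_norm_le_const (Filter.Eventually.of_forall key)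
      _ < eps := by
          rw [measure_univ, ENNReal.toReal_one, mul_one]
          linarith
  · intro i b
    exact integral_nonneg fun g => f0.nonneg i _
  · intro b
    rw [← integral_finset_sum Finset.univ (fun i _ => hint i b)]
    have : ∀ g : G, ∑ i, f0 i (g⁻¹ • b) = 1 := by
      intro g
      rw [← finsum_eq_sum_of_fintype]
      exact f0.sum_eq_one (mem_univ _)
    simp only [this, integral_const, Measure.real, measure_univ, ENNReal.toReal_one, smul_eq_mul, one_mul]
  · intro i b hb
    by_contra hbU
    apply hb
    have : ∀ g : G, f0 i (g⁻¹ • b) = 0 := by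
      intro g
      apply image_eq_zero_of_notMem_tsupport
      intro hmem
      exact hbU (by simpa using hinv i g _ (hf0 i hmem))
    simp [this]
  · intro i g b
    have : (fun h : G => f0 i (h⁻¹ • g • b)) = fun h : G => f0 i ((g⁻¹ * h)⁻¹ • b) := by
      funext h
      rw [mul_inv_rev, inv_inv, mul_smul]
    show (∫ h : G, f0 i (h⁻¹ • g • b) ∂μ) = ∫ h : G, f0 i (h⁻¹ • b) ∂μ
    rw [this]
    exact integral_mul_left_eq_self (μ := μ) (fun h : G => f0 i (h⁻¹ • b)) g⁻¹

end PouAux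

/-! ### Auxiliary material for the proof -/

section SecatAux
set_option linter.unusedSectionVars false

open MeasureTheory

lemma joinMk_eq_elim {E B : Type*} [TopologicalSpace E] [TopologicalSpace B] {p : E → B} {k : ℕ}
    {a b : JoinPre p k} (h : joinMk p k a = joinMk p k b) :
    a.1.2 = b.1.2 ∧ ∀ i, a.1.2 i ≠ 0 → a.1.1 i = b.1.1 i := by
  have H := Quot.eqvGen_exact h
  clear h
  induction H with
  | rel x y hxy => exact hxy
  | refl x => exact ⟨rfl, fun _ _ => rfl⟩
  | symm x y hxy ih =>
      refine ⟨ih.1.symm, fun i hi => ?_⟩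
      exact (ih.2 i (by rw [ih.1]; exact hi)).symm
  | trans x y z h1 h2 ih1 ih2 =>
      exact ⟨ih1.1.trans ih2.1, fun i hi =>
        (ih1.2 i hi).trans (ih2.2 i (by rw [← ih1.1]; exact hi))⟩

variable {E B : Type*} [TopologicalSpace E] [TopologicalSpace B]

/-- The `i`-th join coordinate, as a map on the fibred join. -/
def joinTI (p : E → B) (k : ℕ) (i : Fin (k + 1)) : FibredJoin p k → I :=
  Quot.lift (fun a => a.1.2 i) (fun a b hab => by show a.1.2 i = b.1.2 i; rw [hab.1])

lemma continuous_joinPre_e (p : E → B) (k : ℕ) (i : Fin (k + 1)) :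
    Continuous fun a : JoinPre p k => a.1.1 i :=
  (continuous_apply i).comp (continuous_fst.comp continuous_subtype_val)

lemma continuous_joinPre_t (p : E → B) (k : ℕ) (i : Fin (k + 1)) :
    Continuous fun a : JoinPre p k => a.1.2 i :=
  (continuous_apply i).comp (continuous_snd.comp continuous_subtype_val)

lemma joinTI_continuous (p : E → B) (k : ℕ) (i : Fin (k + 1)) :
    Continuous (joinTI p k i) :=
  continuous_quot_lift _ (continuous_joinPre_t p k i)

lemma joinTI_mk (p : E → B) (k : ℕ) (i : Fin (k + 1)) (a : JoinPre p k) :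
    joinTI p k i (joinMk p k a) = a.1.2 i := rfl

lemma joinSMul_mk {G : Type*} [Group G] [MulAction G E] [MulAction G B] {p : E → B}
    (hp : ∀ (g : G) (e : E), p (g • e) = g • p e) (k : ℕ) (g : G) (a : JoinPre p k) :
    joinSMul hp k g (joinMk p k a) =
      joinMk p k ⟨((fun i => g • a.1.1 i), a.1.2),
        ⟨fun i j => by simp only [hp, a.2.1 i j], a.2.2⟩⟩ := rfl

lemma joinTI_smul {G : Type*} [Group G] [MulAction G E] [MulAction G B] {p : E → B}
    (hp : ∀ (g : G) (e : E), p (g • e) = g • p e) (k : ℕ) (g : G) (i : Fin (k + 1))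
    (x : FibredJoin p k) : joinTI p k i (joinSMul hp k g x) = joinTI p k i x := by
  induction x using Quot.ind with
  | mk a => rfl

/-- The set of points of the fibred join whose `i`-th coordinate is nonzero and whose
`i`-th point lies in `V`. -/
def joinESet (p : E → B) (k : ℕ) (i : Fin (k + 1)) (V : Set E) : Set (FibredJoin p k) :=
  {x | ∃ a : JoinPre p k, joinMk p k a = x ∧ a.1.2 i ≠ 0 ∧ a.1.1 i ∈ V}

lemma joinESet_preimage (p : E → B) (k : ℕ) (i : Fin (k + 1)) (V : Set E) :
    Quot.mk (joinRel p k) ⁻¹' joinESet p k i V =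
      {a : JoinPre p k | a.1.2 i ≠ 0 ∧ a.1.1 i ∈ V} := by
  ext a
  constructor
  · rintro ⟨a', ha', ht, hV⟩
    have h := joinMk_eq_elim (a := a') (b := a) ha'
    refine ⟨by rw [← h.1]; exact ht, ?_⟩
    rw [← h.2 i ht]
    exact hV
  · rintro ⟨ht, hV⟩
    exact ⟨a, rfl, ht, hV⟩

lemma joinESet_isOpen (p : E → B) (k : ℕ) (i : Fin (k + 1)) {V : Set E} (hV : IsOpen V) :
    IsOpen (joinESet p k i V) := by
  refine (isQuotientMap_quot_mk (r := joinRel p k)).isOpen_preimage.mp ?_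
  rw [joinESet_preimage]
  have : {a : JoinPre p k | a.1.2 i ≠ 0 ∧ a.1.1 i ∈ V} =
      ((fun a : JoinPre p k => a.1.2 i) ⁻¹' {(0 : I)}ᶜ) ∩
      ((fun a : JoinPre p k => a.1.1 i) ⁻¹' V) := rfl
  rw [this]
  exact ((isOpen_compl_singleton).preimage (continuous_joinPre_t p k i)).inter
    (hV.preimage (continuous_joinPre_e p k i))

end SecatAux

section ForwardAux
set_option linter.unusedSectionVars false

variable {E B : Type*} [TopologicalSpace E] [TopologicalSpace B] {k : ℕ}

/-- Join coordinates built from a partition of unity, cut off at level `c` and renormalized. -/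
def fwdT (f : Fin (k + 1) → B → ℝ) (c : ℝ) (b : B) (i : Fin (k + 1)) : ℝ :=
  max (f i b - c) 0 / ∑ j, max (f j b - c) 0

lemma fwdT_nonneg (f : Fin (k + 1) → B → ℝ) (c : ℝ) (b : B) (i : Fin (k + 1)) :
    0 ≤ fwdT f c b i :=
  div_nonneg (le_max_right _ _) (Finset.sum_nonneg fun _ _ => le_max_right _ _)

lemma fwdD_pos {f : Fin (k + 1) → B → ℝ} {c : ℝ} {b : B} (hbig : ∃ i, c < f i b) :
    0 < ∑ j, max (f j b - c) 0 := by
  obtain ⟨i, hi⟩ := hbig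
  refine Finset.sum_pos' (fun j _ => le_max_right _ _) ⟨i, Finset.mem_univ i, ?_⟩
  exact lt_max_iff.mpr (Or.inl (by linarith))

lemma fwdT_le_one {f : Fin (k + 1) → B → ℝ} {c : ℝ} {b : B} (hbig : ∃ i, c < f i b)
    (i : Fin (k + 1)) : fwdT f c b i ≤ 1 := by
  simp only [fwdT]
  rw [div_le_one (fwdD_pos hbig)]
  exact Finset.single_le_sum (f := fun j => max (f j b - c) 0)
    (fun j _ => le_max_right _ _) (Finset.mem_univ i)

lemma fwdT_sum {f : Fin (k + 1) → B → ℝ} {c : ℝ} {b : B} (hbig : ∃ i, c < f i b) :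
    ∑ i, fwdT f c b i = 1 := by
  simp only [fwdT]
  rw [← Finset.sum_div, div_self (fwdD_pos hbig).ne']

lemma lt_of_fwdT_ne_zero {f : Fin (k + 1) → B → ℝ} {c : ℝ} {b : B} {i : Fin (k + 1)}
    (h : fwdT f c b i ≠ 0) : c < f i b := by
  by_contra hle
  push_neg at hle
  exact h (by simp only [fwdT]; rw [max_eq_right (by linarith), zero_div])

lemma fwdT_continuous (f : Fin (k + 1) → B → ℝ) (c : ℝ) (hfc : ∀ i, Continuous (f i))
    (hbig : ∀ b, ∃ i, c < f i b) (i : Fin (k + 1)) :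
    Continuous fun b => fwdT f c b i :=
  (((hfc i).sub continuous_const).max continuous_const).div
    (continuous_finset_sum _ fun j _ => ((hfc j).sub continuous_const).max continuous_const)
    fun b => (fwdD_pos (hbig b)).ne'

lemma fwdT_smul {G : Type*} [Group G] [MulAction G B] {f : Fin (k + 1) → B → ℝ} {c : ℝ}
    (hfinv : ∀ i (g : G) (b : B), f i (g • b) = f i b) (g : G) (b : B) (i : Fin (k + 1)) :
    fwdT f c (g • b) i = fwdT f c b i := by
  simp only [fwdT, hfinv]

/-- Join coordinates as elements of the unit interval. -/
def fwdTI (f : Fin (k + 1) → B → ℝ) (c : ℝ) (hbig : ∀ b, ∃ i, c < f i b) (b : B)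
    (i : Fin (k + 1)) : I :=
  ⟨fwdT f c b i, fwdT_nonneg f c b i, fwdT_le_one (hbig b) i⟩

/-- A canonical index at which the partition of unity is positive. -/
def fwdJ (f : Fin (k + 1) → B → ℝ) (hpos : ∀ b, ∃ i, 0 < f i b) (b : B) : Fin (k + 1) :=
  (Finset.univ.filter fun i => 0 < f i b).min' (by
    obtain ⟨i, hi⟩ := hpos b
    exact ⟨i, Finset.mem_filter.mpr ⟨Finset.mem_univ i, hi⟩⟩)

lemma fwdJ_pos (f : Fin (k + 1) → B → ℝ) (hpos : ∀ b, ∃ i, 0 < f i b) (b : B) :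
    0 < f (fwdJ f hpos b) b := by
  unfold fwdJ
  exact (Finset.mem_filter.mp
    (Finset.min'_mem (Finset.univ.filter fun i => 0 < f i b) _)).2

lemma min'_congr_aux {α : Type*} [LinearOrder α] {s t : Finset α} (h : s = t)
    (hs : s.Nonempty) : s.min' hs = t.min' (h ▸ hs) := by subst h; rfl

lemma fwdJ_smul {G : Type*} [Group G] [MulAction G B] (f : Fin (k + 1) → B → ℝ)
    (hpos : ∀ b, ∃ i, 0 < f i b) (hfinv : ∀ i (g : G) (b : B), f i (g • b) = f i b)
    (g : G) (b : B) : fwdJ f hpos (g • b) = fwdJ f hpos b := by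
  have hset : (Finset.univ.filter fun i => 0 < f i (g • b)) =
      (Finset.univ.filter fun i => 0 < f i b) :=
    Finset.filter_congr fun i _ => by rw [hfinv]
  exact min'_congr_aux hset _

lemma sigma_congr_aux {U : Fin (k + 1) → Set B} (sig : ∀ i, U i → E) {i j : Fin (k + 1)}
    (h : i = j) {x : U i} {y : U j} (hxy : (x : B) = (y : B)) : sig i x = sig j y := by
  subst h
  rw [Subtype.ext hxy]

variable (p : E → B)

/-- The points of the join tuple: the local section where the partition function is positive,
a fallback section elsewhere. -/
def fwdE (f : Fin (k + 1) → B → ℝ) (U : Fin (k + 1) → Set B) (sig : ∀ i, U i → E)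
    (hU : ∀ i b, 0 < f i b → b ∈ U i) (hpos : ∀ b, ∃ i, 0 < f i b)
    (b : B) (i : Fin (k + 1)) : E :=
  if h : 0 < f i b then sig i ⟨b, hU i b h⟩
  else sig (fwdJ f hpos b) ⟨b, hU _ b (fwdJ_pos f hpos b)⟩

lemma fwdE_proj {f : Fin (k + 1) → B → ℝ} {U : Fin (k + 1) → Set B} {sig : ∀ i, U i → E}
    (hU : ∀ i b, 0 < f i b → b ∈ U i) (hpos : ∀ b, ∃ i, 0 < f i b)
    (hsigp : ∀ i (x : U i), p (sig i x) = (x : B)) (b : B) (i : Fin (k + 1)) :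
    p (fwdE f U sig hU hpos b i) = b := by
  unfold fwdE
  split <;> exact hsigp _ _

/-- The global join tuple. -/
def fwdTuple (f : Fin (k + 1) → B → ℝ) (c : ℝ) (U : Fin (k + 1) → Set B) (sig : ∀ i, U i → E)
    (hU : ∀ i b, 0 < f i b → b ∈ U i) (hpos : ∀ b, ∃ i, 0 < f i b)
    (hbig : ∀ b, ∃ i, c < f i b) (hsigp : ∀ i (x : U i), p (sig i x) = (x : B)) (b : B) :
    JoinPre p k :=
  ⟨(fwdE f U sig hU hpos b, fwdTI f c hbig b),
   ⟨fun i j => by rw [fwdE_proj p hU hpos hsigp b i, fwdE_proj p hU hpos hsigp b j],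
    fwdT_sum (hbig b)⟩⟩

/-- The global section of the fibred join. -/
def fwdGlob (f : Fin (k + 1) → B → ℝ) (c : ℝ) (U : Fin (k + 1) → Set B) (sig : ∀ i, U i → E)
    (hU : ∀ i b, 0 < f i b → b ∈ U i) (hpos : ∀ b, ∃ i, 0 < f i b)
    (hbig : ∀ b, ∃ i, c < f i b) (hsigp : ∀ i (x : U i), p (sig i x) = (x : B)) :
    B → FibredJoin p k :=
  fun b => joinMk p k (fwdTuple p f c U sig hU hpos hbig hsigp b)

lemma fwdGlob_proj (f : Fin (k + 1) → B → ℝ) (c : ℝ) (U : Fin (k + 1) → Set B)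
    (sig : ∀ i, U i → E) (hU : ∀ i b, 0 < f i b → b ∈ U i) (hpos : ∀ b, ∃ i, 0 < f i b)
    (hbig : ∀ b, ∃ i, c < f i b) (hsigp : ∀ i (x : U i), p (sig i x) = (x : B)) (b : B) :
    joinProj p k (fwdGlob p f c U sig hU hpos hbig hsigp b) = b :=
  fwdE_proj p hU hpos hsigp b 0

lemma fwdGlob_smul {G : Type*} [Group G] [MulAction G E] [MulAction G B]
    (hp : ∀ (g : G) (e : E), p (g • e) = g • p e)
    (f : Fin (k + 1) → B → ℝ) (c : ℝ) (U : Fin (k + 1) → Set B) (sig : ∀ i, U i → E)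
    (hU : ∀ i b, 0 < f i b → b ∈ U i) (hpos : ∀ b, ∃ i, 0 < f i b)
    (hbig : ∀ b, ∃ i, c < f i b) (hsigp : ∀ i (x : U i), p (sig i x) = (x : B))
    (hfinv : ∀ i (g : G) (b : B), f i (g • b) = f i b)
    (hsige : ∀ i (g : G) (x : U i) (hg : g • (x : B) ∈ U i), sig i ⟨g • (x : B), hg⟩ = g • sig i x)
    (g : G) (b : B) :
    fwdGlob p f c U sig hU hpos hbig hsigp (g • b) =
      joinSMul hp k g (fwdGlob p f c U sig hU hpos hbig hsigp b) := by
  simp only [fwdGlob]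
  rw [joinSMul_mk]
  apply congrArg
  apply Subtype.ext
  apply Prod.ext
  · funext i
    show fwdE f U sig hU hpos (g • b) i = g • fwdE f U sig hU hpos b i
    by_cases h : 0 < f i b
    · have h' : 0 < f i (g • b) := by rw [hfinv]; exact h
      unfold fwdE
      rw [dif_pos h, dif_pos h']
      exact hsige i g ⟨b, hU i b h⟩ (hU i (g • b) h')
    · have h' : ¬ 0 < f i (g • b) := by rw [hfinv]; exact h
      unfold fwdE
      rw [dif_neg h, dif_neg h']
      have hmem : g • b ∈ U (fwdJ f hpos b) := by
        apply hU
        rw [hfinv]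
        exact fwdJ_pos f hpos b
      calc sig (fwdJ f hpos (g • b)) ⟨g • b, hU _ (g • b) (fwdJ_pos f hpos (g • b))⟩
          = sig (fwdJ f hpos b) ⟨g • b, hmem⟩ :=
            sigma_congr_aux sig (fwdJ_smul f hpos hfinv g b) rfl
        _ = g • sig (fwdJ f hpos b) ⟨b, hU _ b (fwdJ_pos f hpos b)⟩ :=
            hsige (fwdJ f hpos b) g ⟨b, hU _ b (fwdJ_pos f hpos b)⟩ hmem
  · funext i
    show fwdTI f c hbig (g • b) i = fwdTI f c hbig b i
    exact Subtype.ext (fwdT_smul hfinv g b i)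

/-- The local comparison tuple over the set where the partition functions indexed by `S`
are positive. -/
def fwdTupleS (f : Fin (k + 1) → B → ℝ) (c : ℝ) (U : Fin (k + 1) → Set B) (sig : ∀ i, U i → E)
    (hU : ∀ i b, 0 < f i b → b ∈ U i) (hbig : ∀ b, ∃ i, c < f i b)
    (hsigp : ∀ i (x : U i), p (sig i x) = (x : B))
    (S : Finset (Fin (k + 1))) (j0 : Fin (k + 1)) (hj0 : j0 ∈ S)
    (x : {b : B // ∀ i ∈ S, 0 < f i b}) : JoinPre p k :=
  ⟨(fun i => if h : i ∈ S then sig i ⟨x.1, hU i x.1 (x.2 i h)⟩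
      else sig j0 ⟨x.1, hU j0 x.1 (x.2 j0 hj0)⟩,
    fwdTI f c hbig x.1),
   ⟨fun i j => by
      have h1 : ∀ m, p (if h : m ∈ S then sig m ⟨x.1, hU m x.1 (x.2 m h)⟩
          else sig j0 ⟨x.1, hU j0 x.1 (x.2 j0 hj0)⟩) = x.1 := by
        intro m
        split <;> exact hsigp _ _
      rw [h1, h1],
    fwdT_sum (hbig x.1)⟩⟩

lemma fwdTupleS_cont (f : Fin (k + 1) → B → ℝ) (c : ℝ) (U : Fin (k + 1) → Set B)
    (sig : ∀ i, U i → E) (hU : ∀ i b, 0 < f i b → b ∈ U i) (hbig : ∀ b, ∃ i, c < f i b)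
    (hsigp : ∀ i (x : U i), p (sig i x) = (x : B)) (hfc : ∀ i, Continuous (f i))
    (hsigc : ∀ i, Continuous (sig i))
    (S : Finset (Fin (k + 1))) (j0 : Fin (k + 1)) (hj0 : j0 ∈ S) :
    Continuous (fwdTupleS p f c U sig hU hbig hsigp S j0 hj0) := by
  apply Continuous.subtype_mk
  apply Continuous.prodMk
  · apply continuous_pi
    intro i
    by_cases h : i ∈ S
    · simp only [dif_pos h]
      exact (hsigc i).comp (continuous_subtype_val.subtype_mk _)
    · simp only [dif_neg h]
      exact (hsigc j0).comp (continuous_subtype_val.subtype_mk _)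
  · apply continuous_pi
    intro i
    exact Continuous.subtype_mk ((fwdT_continuous f c hfc hbig i).comp continuous_subtype_val) _

lemma fwdGlob_agree (f : Fin (k + 1) → B → ℝ) (c : ℝ) (U : Fin (k + 1) → Set B)
    (sig : ∀ i, U i → E) (hU : ∀ i b, 0 < f i b → b ∈ U i) (hpos : ∀ b, ∃ i, 0 < f i b)
    (hbig : ∀ b, ∃ i, c < f i b) (hsigp : ∀ i (x : U i), p (sig i x) = (x : B)) (hc0 : 0 ≤ c)
    (S : Finset (Fin (k + 1))) (j0 : Fin (k + 1)) (hj0 : j0 ∈ S) (b : B)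
    (hbS : ∀ i, (i ∈ S → 0 < f i b) ∧ (i ∉ S → f i b < c)) :
    fwdGlob p f c U sig hU hpos hbig hsigp b =
      Quot.mk (joinRel p k)
        (fwdTupleS p f c U sig hU hbig hsigp S j0 hj0 ⟨b, fun i h => (hbS i).1 h⟩) := by
  apply Quot.sound
  refine ⟨rfl, fun i hi => ?_⟩
  have hne : fwdT f c b i ≠ 0 := fun h0 => hi (Subtype.ext h0)
  have hlt : c < f i b := lt_of_fwdT_ne_zero hne
  have hposi : 0 < f i b := lt_of_le_of_lt hc0 hlt
  have hiS : i ∈ S := by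
    by_contra hiS
    exact absurd ((hbS i).2 hiS) (not_lt.mpr hlt.le)
  show fwdE f U sig hU hpos b i = _
  dsimp only [fwdTupleS]
  unfold fwdE
  rw [dif_pos hposi, dif_pos hiS]

lemma fwdGlob_continuous (f : Fin (k + 1) → B → ℝ) (c : ℝ) (U : Fin (k + 1) → Set B)
    (sig : ∀ i, U i → E) (hU : ∀ i b, 0 < f i b → b ∈ U i) (hpos : ∀ b, ∃ i, 0 < f i b)
    (hbig : ∀ b, ∃ i, c < f i b) (hsigp : ∀ i (x : U i), p (sig i x) = (x : B)) (hc0 : 0 < c)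
    (hf0 : ∀ i b, 0 ≤ f i b) (hfc : ∀ i, Continuous (f i)) (hsigc : ∀ i, Continuous (sig i)) :
    Continuous (fwdGlob p f c U sig hU hpos hbig hsigp) := by
  rw [continuous_iff_continuousAt]
  intro b0
  classical
  set S : Finset (Fin (k + 1)) := Finset.univ.filter (fun i => 0 < f i b0) with hS
  obtain ⟨j0, hj0big⟩ := hbig b0
  have hj0 : j0 ∈ S :=
    Finset.mem_filter.mpr ⟨Finset.mem_univ j0, lt_of_le_of_lt hc0.le hj0big⟩
  set W : Set B := {b | ∀ i, (i ∈ S → 0 < f i b) ∧ (i ∉ S → f i b < c)} with hW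
  have hWo : IsOpen W := by
    have hWi : W = ⋂ i, {b : B | (i ∈ S → 0 < f i b) ∧ (i ∉ S → f i b < c)} := by
      ext b
      simp only [hW, mem_setOf_eq, mem_iInter]
    rw [hWi]
    refine isOpen_iInter_of_finite fun i => ?_
    by_cases h : i ∈ S
    · have : {b : B | (i ∈ S → 0 < f i b) ∧ (i ∉ S → f i b < c)} = (f i) ⁻¹' Set.Ioi 0 := by
        ext b
        simp [h]
      rw [this]
      exact isOpen_Ioi.preimage (hfc i)
    · have : {b : B | (i ∈ S → 0 < f i b) ∧ (i ∉ S → f i b < c)} = (f i) ⁻¹' Set.Iio c := by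
        ext b
        simp [h]
      rw [this]
      exact isOpen_Iio.preimage (hfc i)
  have hb0W : b0 ∈ W := by
    intro i
    refine ⟨fun h => (Finset.mem_filter.mp h).2, fun h => ?_⟩
    have hnp : ¬ 0 < f i b0 := fun hpi => h (Finset.mem_filter.mpr ⟨Finset.mem_univ i, hpi⟩)
    have h0 : 0 ≤ f i b0 := hf0 i b0
    have : f i b0 = 0 := le_antisymm (not_lt.mp hnp) h0
    rw [this]
    exact hc0
  have hCO : ContinuousOn (fwdGlob p f c U sig hU hpos hbig hsigp) W := by
    rw [continuousOn_iff_continuous_restrict]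
    have hres : W.domRestrict (fwdGlob p f c U sig hU hpos hbig hsigp) = fun x : W =>
        Quot.mk (joinRel p k) (fwdTupleS p f c U sig hU hbig hsigp S j0 hj0
          ⟨x.1, fun i h => (x.2 i).1 h⟩) := by
      funext x
      exact fwdGlob_agree p f c U sig hU hpos hbig hsigp hc0.le S j0 hj0 x.1 x.2
    rw [hres]
    exact continuous_quot_mk.comp ((fwdTupleS_cont p f c U sig hU hbig hsigp hfc hsigc S j0 hj0).comp
      (continuous_subtype_val.subtype_mk _))
  exact hCO.continuousAt (hWo.mem_nhds hb0W)

end ForwardAux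

/-- Let `G` be a compact Lie group and `p : E → B` a `G`-fibration over a
paracompact base. Then `secat_G(p) ≤ k` if and only if the `(k+1)`-fold fibred join
`p_k : J^k_B(E) → B` admits a global `G`-equivariant section. -/
theorem secatG_le_iff_fibredJoin_section
    {EG : Type*} [NormedAddCommGroup EG] [NormedSpace ℝ EG]
    (G : Type*) [Group G] [TopologicalSpace G] [ChartedSpace EG G]
    [LieGroup (modelWithCornersSelf ℝ EG) (⊤ : ℕ∞) G] [CompactSpace G]
    {E B : Type u} [TopologicalSpace E] [TopologicalSpace B]
    [MulAction G E] [MulAction G B] [ContinuousSMul G E] [ContinuousSMul G B]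
    [ParacompactSpace B] [T2Space B]
    (p : E → B) (hpc : Continuous p) (hp : ∀ (g : G) (e : E), p (g • e) = g • p e)
    (hfib : IsGFibration G p) (k : ℕ) :
    secatG_le G p k ↔
    ∃ s : B → FibredJoin p k, Continuous s ∧ (∀ b, joinProj p k (s b) = b) ∧
      (∀ (g : G) (b : B), s (g • b) = joinSMul hp k g (s b)) := by
  constructor
  · intro h
    obtain ⟨U, hopen, hinvU, hcover, hsec⟩ := h
    haveI : IsTopologicalGroup G := topologicalGroup_of_lieGroup (modelWithCornersSelf ℝ EG) ((⊤ : ℕ∞) : WithTop ℕ∞)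
    obtain ⟨f, hfc, hf0, hfsum, hfsupp, hfinv⟩ := exists_invariant_pou G U hopen hinvU hcover
    choose sig hsigc hsigp hsige using hsec
    set c : ℝ := 1 / (2 * ((k : ℝ) + 1)) with hc
    have hk : (0:ℝ) < (k : ℝ) + 1 := by positivity
    have hc0 : (0:ℝ) < c := by rw [hc]; positivity
    have hbig : ∀ b, ∃ i, c < f i b := by
      intro b
      by_contra hcon
      push_neg at hcon
      have hle : (∑ i, f i b) ≤ ∑ _i : Fin (k + 1), c :=
        Finset.sum_le_sum fun i _ => hcon i
      rw [hfsum b, Finset.sum_const, Finset.card_univ, Fintype.card_fin, nsmul_eq_mul] at hle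
      have hval : ((k : ℝ) + 1) * c = 1 / 2 := by
        rw [hc]
        field_simp
      rw [show (((k + 1 : ℕ) : ℝ)) = (k : ℝ) + 1 by push_cast; ring, hval] at hle
      linarith
    have hpos : ∀ b, ∃ i, 0 < f i b := fun b => (hbig b).imp fun i hi => lt_trans hc0 hi
    have hU : ∀ i b, 0 < f i b → b ∈ U i := fun i b hb => hfsupp i b hb.ne'
    exact ⟨fwdGlob p f c U sig hU hpos hbig hsigp,
      fwdGlob_continuous p f c U sig hU hpos hbig hsigp hc0 hf0 hfc hsigc,
      fwdGlob_proj p f c U sig hU hpos hbig hsigp,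
      fun g b => fwdGlob_smul p hp f c U sig hU hpos hbig hsigp hfinv hsige g b⟩
  · rintro ⟨s, hsc, hsp, hse⟩
    classical
    set r : B → JoinPre p k := fun b => (Quot.exists_rep (s b)).choose with hrdef
    have hrmk : ∀ b, joinMk p k (r b) = s b := fun b => (Quot.exists_rep (s b)).choose_spec
    refine ⟨fun i => {b | joinTI p k i (s b) ≠ 0}, ?_, ?_, ?_, ?_⟩
    · intro i
      exact (isOpen_compl_singleton).preimage ((joinTI_continuous p k i).comp hsc)
    · intro i g b hb
      show joinTI p k i (s (g • b)) ≠ 0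
      rw [hse g b, joinTI_smul]
      exact hb
    · apply eq_univ_of_forall
      intro b
      obtain ⟨i, hi⟩ := (r b).exists_ne_zero
      refine mem_iUnion.mpr ⟨i, ?_⟩
      show joinTI p k i (s b) ≠ 0
      rw [← hrmk b, joinTI_mk]
      exact hi
    · intro i
      have hkey : ∀ b : {b | joinTI p k i (s b) ≠ 0}, (r b.1).1.2 i ≠ 0 := by
        intro b
        have hb : joinTI p k i (s (b : B)) ≠ 0 := b.2
        rwa [show joinTI p k i (s (b : B)) = (r (b : B)).1.2 i from by
          rw [← hrmk (b : B), joinTI_mk]] at hb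
      refine ⟨fun b => (r b.1).1.1 i, ?_, ?_, ?_⟩
      · rw [continuous_def]
        intro V hV
        have hpre : (fun b : {b | joinTI p k i (s b) ≠ 0} => (r b.1).1.1 i) ⁻¹' V =
            (fun b : {b | joinTI p k i (s b) ≠ 0} => s b.1) ⁻¹' joinESet p k i V := by
          ext b
          constructor
          · intro hbV
            exact ⟨r b.1, hrmk b.1, hkey b, hbV⟩
          · rintro ⟨a, ha, ht, hV'⟩
            have h := joinMk_eq_elim (a := a) (b := r (b : B))
              (ha.trans (hrmk (b : B)).symm)
            show (r b.1).1.1 i ∈ V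
            rw [← h.2 i ht]
            exact hV'
        rw [hpre]
        exact (joinESet_isOpen p k i hV).preimage (hsc.comp continuous_subtype_val)
      · intro b
        have h1 : p ((r b.1).1.1 i) = p ((r b.1).1.1 0) := (r b.1).2.1 i 0
        have h2 : joinProj p k (s b.1) = b.1 := hsp b.1
        rw [← hrmk b.1] at h2
        exact h1.trans h2
      · intro g b hg
        have h1 : joinMk p k (r (g • (b : B))) = joinSMul hp k g (joinMk p k (r (b : B))) := by
          rw [hrmk, hrmk, hse]
        rw [joinSMul_mk] at h1
        have h2 := joinMk_eq_elim h1
        show (r (g • (b : B))).1.1 i = g • (r (b : B)).1.1 i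
        exact h2.2 i (by rw [h2.1]; exact hkey b)
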